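/- arXiv:1709.04266 — 2 statements merged into one kernel-verified Lean document; each statement's English description precedes it below -/
import Mathlib

section
/- Let c : ℝ → ℝ be continuous and u₁, u₂ ∈ {-1,1} with u₁ ≠ u₂. Suppose there is τ such that for t < τ near τ, u₁ is a maximizer of v ↦ v·c(t) − |v|·d(t) on [-1,1], and for t > τ near τ, u₂ is a maximizer, where d : ℝ → ℝ is continuous and nonnegative. Then d(τ) = 0 (and c(τ) = 0). -/
lemma aux_closure_nonneg {f : ℝ → ℝ} (hf : Continuous f) {s : Set ℝ} {τ : ℝ}
    (hτ : τ ∈ closure s) (h : ∀ t ∈ s, 0 ≤ f t) : 0 ≤ f τ := by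
  have hne : (nhdsWithin τ s).NeBot := mem_closure_iff_nhdsWithin_neBot.mp hτ
  refine ge_of_tendsto (hf.continuousWithinAt (s := s)) ?_
  exact eventually_nhdsWithin_of_forall h

/-- If `u₁ ≠ u₂` are bang controls in `{-1,1}`, `c, d` continuous with `d ≥ 0`, and `u₁`
maximizes `v ↦ v·c(t) − |v|·d(t)` on `[-1,1]` for `t < τ` near `τ` while `u₂` maximizes for
`t > τ` near `τ`, then `d(τ) = 0` and `c(τ) = 0`. -/
theorem stmt2 (c d : ℝ → ℝ) (hc : Continuous c) (hd : Continuous d)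
    (hd0 : ∀ t, 0 ≤ d t)
    (u₁ u₂ : ℝ) (hu₁ : u₁ = -1 ∨ u₁ = 1) (hu₂ : u₂ = -1 ∨ u₂ = 1) (hne : u₁ ≠ u₂)
    (τ : ℝ)
    (hmax : ∃ δ > 0,
      (∀ t ∈ Set.Ioo (τ - δ) τ, ∀ v ∈ Set.Icc (-1 : ℝ) 1,
        v * c t - |v| * d t ≤ u₁ * c t - |u₁| * d t) ∧
      (∀ t ∈ Set.Ioo τ (τ + δ), ∀ v ∈ Set.Icc (-1 : ℝ) 1,
        v * c t - |v| * d t ≤ u₂ * c t - |u₂| * d t)) :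
    d τ = 0 ∧ c τ = 0 := by
  obtain ⟨δ, hδ, h1, h2⟩ := hmax
  have habs1 : |u₁| = 1 := by rcases hu₁ with h | h <;> simp [h]
  have habs2 : |u₂| = 1 := by rcases hu₂ with h | h <;> simp [h]
  -- pointwise bounds on each side
  have key1 : ∀ t ∈ Set.Ioo (τ - δ) τ, 0 ≤ u₁ * c t - d t := by
    intro t ht
    have := h1 t ht 0 ⟨by norm_num, by norm_num⟩
    simp [habs1] at this
    linarith
  have key2 : ∀ t ∈ Set.Ioo τ (τ + δ), 0 ≤ u₂ * c t - d t := by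
    intro t ht
    have := h2 t ht 0 ⟨by norm_num, by norm_num⟩
    simp [habs2] at this
    linarith
  have hcl1 : τ ∈ closure (Set.Ioo (τ - δ) τ) := by
    rw [closure_Ioo (by linarith : τ - δ ≠ τ)]
    exact ⟨by linarith, le_refl _⟩
  have hcl2 : τ ∈ closure (Set.Ioo τ (τ + δ)) := by
    rw [closure_Ioo (by linarith : τ ≠ τ + δ)]
    exact ⟨le_refl _, by linarith⟩
  have A : 0 ≤ u₁ * c τ - d τ :=
    aux_closure_nonneg ((continuous_const.mul hc).sub hd : Continuous fun t => u₁ * c t - d t) hcl1 key1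
  have B : 0 ≤ u₂ * c τ - d τ :=
    aux_closure_nonneg ((continuous_const.mul hc).sub hd : Continuous fun t => u₂ * c t - d t) hcl2 key2
  have hopp : u₂ = -u₁ := by
    rcases hu₁ with h | h <;> rcases hu₂ with h' | h' <;> simp_all
  have hdτ : d τ = 0 := by rw [hopp] at B; have := hd0 τ; linarith
  refine ⟨hdτ, ?_⟩
  rw [hopp] at B
  have hu1ne : u₁ ≠ 0 := by rcases hu₁ with h | h <;> simp [h]
  have : u₁ * c τ = 0 := by rw [hdτ] at A B; linarith
  rcases mul_eq_zero.mp this with h | h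
  · exact absurd h hu1ne
  · exact h
end

section
/- Let α > 0 and X > 0, and set T_min = (1/α)·log((1 + √(1 − e^{−α²X}))/(1 − √(1 − e^{−α²X}))) and T_lim = (1/α)·log((1+√2)e^{α²X} − 1 + √(((1+√2)e^{α²X} − 1)² − 1)). Then 0 < T_min < T_lim. -/
set_option maxHeartbeats 800000

lemma stmt14_aux (y r t u B : ℝ) (hy1 : 1 < y) (hr2 : r ^ 2 = 2) (hr0 : 0 ≤ r)
    (ht2 : t ^ 2 = y ^ 2 - y) (ht0 : 0 ≤ t) (hB : B = (1 + r) * y - 1)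
    (hu2 : u ^ 2 = B ^ 2 - 1) (hu0 : 0 ≤ u) :
    2 * y - 1 + 2 * t < B + u := by
  have hr1 : 1 < r := by nlinarith
  have hB1 : 1 < B := by nlinarith
  have hr54 : 5 / 4 < r := by nlinarith
  have hry1 : 1 < r * y := by nlinarith
  have ht_bound : t ≤ r * y - 1 := by
    have hsq : t ^ 2 ≤ (r * y - 1) ^ 2 := by
      nlinarith [sq_nonneg (2 * y - (2 * r - 1))]
    nlinarith
  have hu_bound : B - 1 < u := by nlinarith
  linarith

/-- With `α > 0`, `X > 0`,
`T_min = (1/α)·log((1 + √(1 − e^{−α²X}))/(1 − √(1 − e^{−α²X})))` and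
`T_lim = (1/α)·log((1+√2)e^{α²X} − 1 + √(((1+√2)e^{α²X} − 1)² − 1))`,
one has `0 < T_min < T_lim`. -/
theorem stmt14 (α X : ℝ) (hα : 0 < α) (hX : 0 < X) :
    let Tmin : ℝ := (1 / α) * Real.log
      ((1 + Real.sqrt (1 - Real.exp (-(α ^ 2 * X)))) /
        (1 - Real.sqrt (1 - Real.exp (-(α ^ 2 * X)))))
    let Tlim : ℝ := (1 / α) * Real.log
      ((1 + Real.sqrt 2) * Real.exp (α ^ 2 * X) - 1 +
        Real.sqrt (((1 + Real.sqrt 2) * Real.exp (α ^ 2 * X) - 1) ^ 2 - 1))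
    0 < Tmin ∧ Tmin < Tlim := by
  intro Tmin Tlim
  unfold Tmin Tlim
  clear Tmin Tlim
  have hax : 0 < α ^ 2 * X := by positivity
  set y : ℝ := Real.exp (α ^ 2 * X) with hy_def
  have hy1 : 1 < y := by
    rw [hy_def, show (1:ℝ) = Real.exp 0 by simp]
    exact Real.exp_lt_exp.mpr hax
  have hy0 : 0 < y := by linarith
  have hE : Real.exp (-(α ^ 2 * X)) = 1 / y := by
    rw [Real.exp_neg, hy_def, one_div]
  set s : ℝ := Real.sqrt (1 - Real.exp (-(α ^ 2 * X))) with hs_def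
  have hE01 : 0 < 1 / y ∧ 1 / y < 1 := by
    constructor
    · positivity
    · rw [div_lt_one hy0]; linarith
  have hs0 : 0 ≤ s := Real.sqrt_nonneg _
  have hs2 : s ^ 2 = 1 - 1 / y := by
    rw [hs_def, hE, Real.sq_sqrt]; linarith [hE01.2]
  have hsp : 0 < s := by
    rw [hs_def, hE]
    exact Real.sqrt_pos.mpr (by linarith [hE01.2])
  have hs1 : s < 1 := by nlinarith [hE01.1]
  have hA1 : 1 < (1 + s) / (1 - s) := by
    rw [lt_div_iff₀ (by linarith)]; linarith
  set r : ℝ := Real.sqrt 2 with hr_def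
  have hr2 : r ^ 2 = 2 := Real.sq_sqrt (by norm_num)
  have hr0 : 0 ≤ r := Real.sqrt_nonneg _
  set B : ℝ := (1 + r) * y - 1 with hB_def
  have hr1 : 1 < r := by nlinarith
  have hB1 : 1 < B := by nlinarith
  set t : ℝ := Real.sqrt (y ^ 2 - y) with ht_def
  have ht2 : t ^ 2 = y ^ 2 - y := Real.sq_sqrt (by nlinarith)
  have ht0 : 0 ≤ t := Real.sqrt_nonneg _
  set u : ℝ := Real.sqrt (B ^ 2 - 1) with hu_def
  have hu2 : u ^ 2 = B ^ 2 - 1 := Real.sq_sqrt (by nlinarith)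
  have hu0 : 0 ≤ u := Real.sqrt_nonneg _
  have hst : y * s = t := by
    rw [ht_def, ← Real.sqrt_sq (by positivity : (0:ℝ) ≤ y * s)]
    congr 1
    rw [mul_pow, hs2]
    field_simp
  have key : (1 - s ^ 2) * y = 1 := by
    rw [hs2]; field_simp; ring
  have hA_eq : (1 + s) / (1 - s) = (1 + s) ^ 2 * y := by
    rw [div_eq_iff (by linarith : (1:ℝ) - s ≠ 0)]
    linear_combination -(1 + s) * key
  clear_value u t B r s y
  clear hu_def ht_def hr_def hs_def hE hy_def
  have hexpand : (1 + s) ^ 2 * y = 2 * y - 1 + 2 * t := by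
    linear_combination 2 * hst - key
  have hmain : (1 + s) / (1 - s) < B + u := by
    rw [hA_eq, hexpand]
    exact stmt14_aux y r t u B hy1 hr2 hr0 ht2 ht0 hB_def hu2 hu0
  refine ⟨mul_pos (by positivity) (Real.log_pos hA1), ?_⟩
  exact mul_lt_mul_of_pos_left (Real.log_lt_log (by linarith) hmain) (by positivity)
end
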